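/- Let H, R be finite-dimensional complex Hilbert spaces, B = ℂ², |ψ⟩ a unit vector in H⊗B⊗R, and γ, ε ∈ [0,1]. If there exists a (γ,ε)-radiation decoder against |ψ⟩, then there exists a (γ,ε)-superdense decoder against |ψ⟩. -/
import Mathlib


open Matrix BigOperators
open scoped ComplexOrder

noncomputable section

namespace BHRD

/-- A (qu)bit index. -/
abbrev Bit := ZMod 2

/-- The Pauli `X` matrix. -/
def Xm : Matrix Bit Bit ℂ := Matrix.of fun i j => if i = j + 1 then 1 else 0

/-- The Pauli `Z` matrix. -/
def Zm : Matrix Bit Bit ℂ := Matrix.of fun i j => if i = j then (if j = 1 then -1 else 1) else 0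

/-- The Pauli mask `X^x Z^z`. -/
def pauli (x z : Bit) : Matrix Bit Bit ℂ := Xm ^ x.val * Zm ^ z.val

/-- The EPR vector `(|00⟩+|11⟩)/√2`. -/
def epr : Bit × Bit → ℂ := fun p => if p.1 = p.2 then (((Real.sqrt 2 : ℝ) : ℂ))⁻¹ else 0

variable {dH dR : ℕ}

/-- The reduced density matrix of `|ψ⟩ ∈ H ⊗ B ⊗ R` on `B ⊗ R`, i.e. `Tr_H |ψ⟩⟨ψ|`. -/
def rhoBR (ψ : Fin dH × Bit × Fin dR → ℂ) :
    Matrix (Bit × Fin dR) (Bit × Fin dR) ℂ :=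
  Matrix.of fun p q => ∑ h : Fin dH, ψ (h, p) * (starRingEnd ℂ) (ψ (h, q))

/-- `(X^x Z^z) ⊗ I_R` acting on `B ⊗ R`. -/
def maskB (dR : ℕ) (x z : Bit) : Matrix (Bit × Fin dR) (Bit × Fin dR) ℂ :=
  Matrix.of fun p q => if p.2 = q.2 then pauli x z p.1 q.1 else 0

/-- The masked state `ρ^{xz} = (X^x Z^z ⊗ I) Tr_H|ψ⟩⟨ψ| (X^x Z^z ⊗ I)†`. -/
def rhoXZ (ψ : Fin dH × Bit × Fin dR → ℂ) (x z : Bit) :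
    Matrix (Bit × Fin dR) (Bit × Fin dR) ℂ :=
  maskB dR x z * rhoBR ψ * (maskB dR x z)ᴴ

/-- `K` is a family of Kraus operators for a (trace-preserving) quantum channel. -/
def IsKraus {α β : Type*} [Fintype α] [Fintype β] [DecidableEq β] {k : ℕ}
    (K : Fin k → Matrix α β ℂ) : Prop :=
  ∑ i, (K i)ᴴ * K i = 1

/-- Application of the channel with Kraus operators `K` to a state `ρ`. -/
def applyCh {α β : Type*} [Fintype α] [Fintype β] {k : ℕ}
    (K : Fin k → Matrix α β ℂ) (ρ : Matrix β β ℂ) : Matrix α α ℂ :=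
  ∑ i, K i * ρ * (K i)ᴴ

/-- The extension `id_B ⊗ A` of a channel `A : R → D ⊗ F` given by a Kraus operator `K`:
a Kraus operator from `B ⊗ R` to `B ⊗ D ⊗ F`. -/
def extB (K : Matrix (Bit × Bit) (Fin dR) ℂ) :
    Matrix (Bit × Bit × Bit) (Bit × Fin dR) ℂ :=
  Matrix.of fun p q => if p.1 = q.1 then K p.2 q.2 else 0

/-- The projector `I_{B⊗D} ⊗ |0⟩⟨0|_F` on `B ⊗ D ⊗ F`. -/
def PF0 : Matrix (Bit × Bit × Bit) (Bit × Bit × Bit) ℂ :=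
  Matrix.of fun p q =>
    if p.1 = q.1 ∧ p.2.1 = q.2.1 ∧ p.2.2 = 0 ∧ q.2.2 = 0 then 1 else 0

/-- The projector `|epr⟩⟨epr|_{B⊗D} ⊗ |0⟩⟨0|_F` on `B ⊗ D ⊗ F`. -/
def Pepr0 : Matrix (Bit × Bit × Bit) (Bit × Bit × Bit) ℂ :=
  Matrix.of fun p q =>
    (if p.2.2 = 0 ∧ q.2.2 = 0 then 1 else 0) *
      (epr (p.1, p.2.1) * (starRingEnd ℂ) (epr (q.1, q.2.1)))

/-- `K` is (the Kraus family of) a `(γ,ε)`-radiation decoder against `ψ`. -/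
def IsRadDecoder (ψ : Fin dH × Bit × Fin dR → ℂ) (γ ε : ℝ) {k : ℕ}
    (K : Fin k → Matrix (Bit × Bit) (Fin dR) ℂ) : Prop :=
  IsKraus K ∧
  γ ≤ ((PF0 * applyCh (fun i => extB (K i)) (rhoBR ψ)).trace).re ∧
  ((PF0 * applyCh (fun i => extB (K i)) (rhoBR ψ)).trace).re * (1/4 + (3/4) * ε) ≤
    ((Pepr0 * applyCh (fun i => extB (K i)) (rhoBR ψ)).trace).re

/-- The projector `I_P ⊗ |0⟩⟨0|_F` on `P ⊗ F`. -/
def QF0 : Matrix ((Bit × Bit) × Bit) ((Bit × Bit) × Bit) ℂ :=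
  Matrix.of fun p q => if p.1 = q.1 ∧ p.2 = 0 ∧ q.2 = 0 then 1 else 0

/-- The projector `|x,z⟩⟨x,z|_P ⊗ |0⟩⟨0|_F` on `P ⊗ F`. -/
def Qxz0 (x z : Bit) : Matrix ((Bit × Bit) × Bit) ((Bit × Bit) × Bit) ℂ :=
  Matrix.of fun p q => if p = ((x, z), 0) ∧ q = ((x, z), 0) then 1 else 0

/-- `K` is (the Kraus family of) a `(γ,ε)`-superdense decoder against `ψ`. -/
def IsSupDecoder (ψ : Fin dH × Bit × Fin dR → ℂ) (γ ε : ℝ) {k : ℕ}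
    (K : Fin k → Matrix ((Bit × Bit) × Bit) (Bit × Fin dR) ℂ) : Prop :=
  IsKraus K ∧
  γ ≤ (1/4) * ∑ x : Bit, ∑ z : Bit, ((QF0 * applyCh K (rhoXZ ψ x z)).trace).re ∧
  ((1/4) * ∑ x : Bit, ∑ z : Bit, ((QF0 * applyCh K (rhoXZ ψ x z)).trace).re) *
      (1/4 + (3/4) * ε) ≤
    (1/4) * ∑ x : Bit, ∑ z : Bit, ((Qxz0 x z * applyCh K (rhoXZ ψ x z)).trace).re

end BHRD

namespace BHRD

section AuxSD

variable {dH dR : ℕ}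

lemma bit_sum {M : Type*} [AddCommMonoid M] (f : Bit → M) : ∑ x, f x = f 0 + f 1 := by
  rw [show (Finset.univ : Finset Bit) = {0, 1} from by decide]
  rw [Finset.sum_pair (by decide)]

lemma bit_cases : ∀ a : Bit, a = 0 ∨ a = 1 := by decide

lemma pauli_apply (x z a b : Bit) :
    pauli x z a b = (if a = b + x then 1 else 0) * (if z = 1 ∧ b = 1 then -1 else 1) := by
  rcases bit_cases x with hx | hx <;> rcases bit_cases z with hz | hz <;> subst hx hz <;>
    rcases bit_cases a with ha | ha <;> rcases bit_cases b with hb | hb <;> subst ha hb <;>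
    simp [pauli, Xm, Zm, Matrix.mul_apply, Matrix.one_apply, bit_sum, ZMod.val_zero, ZMod.val_one]

lemma pauli_unit (x z a b : Bit) :
    ∑ u : Bit, (starRingEnd ℂ) (pauli x z u a) * pauli x z u b = if a = b then 1 else 0 := by
  rcases bit_cases x with hx | hx <;> rcases bit_cases z with hz | hz <;> subst hx hz <;>
    rcases bit_cases a with ha | ha <;> rcases bit_cases b with hb | hb <;> subst ha hb <;>
    simp (config := { decide := true }) [pauli_apply, bit_sum] <;> norm_num

lemma pauli_complete (a b a' b' : Bit) :
    ∑ x : Bit, ∑ z : Bit, pauli x z a b * (starRingEnd ℂ) (pauli x z a' b')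
      = if a = a' ∧ b = b' then 2 else 0 := by
  rcases bit_cases a with ha | ha <;> rcases bit_cases b with hb | hb <;>
    rcases bit_cases a' with ha' | ha' <;> rcases bit_cases b' with hb' | hb' <;> subst ha hb ha' hb' <;>
    simp (config := { decide := true }) [pauli_apply, bit_sum] <;> norm_num

def c2 : ℂ := (((Real.sqrt 2 : ℝ) : ℂ))⁻¹

lemma star_c2 : (starRingEnd ℂ) c2 = c2 := by
  simp [c2, ← Complex.ofReal_inv]

lemma c2_sq : c2 * c2 = 1/2 := by
  have h : Real.sqrt 2 * Real.sqrt 2 = 2 := Real.mul_self_sqrt (by norm_num)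
  rw [c2, ← Complex.ofReal_inv, ← Complex.ofReal_mul, ← mul_inv, h]
  norm_num

def bell (x z : Bit) (p : Bit × Bit) : ℂ := pauli x z p.1 p.2 * c2

lemma epr_def (p : Bit × Bit) : epr p = if p.1 = p.2 then c2 else 0 := rfl

lemma bell_complete (p q : Bit × Bit) :
    ∑ x : Bit, ∑ z : Bit, bell x z p * (starRingEnd ℂ) (bell x z q)
      = if p = q then 1 else 0 := by
  have : ∀ x z : Bit, bell x z p * (starRingEnd ℂ) (bell x z q)
      = (pauli x z p.1 p.2 * (starRingEnd ℂ) (pauli x z q.1 q.2)) * (c2 * c2) := by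
    intro x z
    simp only [bell, _root_.map_mul, star_c2]
    ring
  simp only [this, ← Finset.sum_mul, pauli_complete, c2_sq]
  rcases p with ⟨a, b⟩; rcases q with ⟨a', b'⟩
  by_cases h : a = a' ∧ b = b' <;> simp [Prod.ext_iff, h] <;> norm_num <;> tauto

lemma sum_conj_pauli_bell (x z b d : Bit) :
    ∑ a : Bit, (starRingEnd ℂ) (pauli x z a b) * bell x z (a, d) = epr (b, d) := by
  simp only [bell, ← mul_assoc, ← Finset.sum_mul, pauli_unit, epr_def]
  split <;> simp
def UM (x z : Bit) : Matrix ((Bit × Bit) × Bit) (Bit × Bit × Bit) ℂ :=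
  Matrix.of fun p q => if p.1 = (x, z) ∧ p.2 = q.2.2 then (starRingEnd ℂ) (bell x z (q.1, q.2.1)) else 0

def Pb0 (x z : Bit) : Matrix (Bit × Bit × Bit) (Bit × Bit × Bit) ℂ :=
  Matrix.of fun p q => (if p.2.2 = 0 ∧ q.2.2 = 0 then 1 else 0) *
    (bell x z (p.1, p.2.1) * (starRingEnd ℂ) (bell x z (q.1, q.2.1)))

def MB (x z : Bit) : Matrix (Bit × Bit × Bit) (Bit × Bit × Bit) ℂ :=
  Matrix.of fun p q => if p.2 = q.2 then pauli x z p.1 q.1 else 0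

lemma sum_UM : ∑ x : Bit, ∑ z : Bit, (UM x z)ᴴ * UM x z = 1 := by
  ext q q'
  simp only [Matrix.sum_apply, Matrix.mul_apply, Matrix.conjTranspose_apply, UM, Matrix.of_apply]
  have : ∀ x z : Bit, (∑ p : (Bit × Bit) × Bit,
      star (if p.1 = (x, z) ∧ p.2 = q.2.2 then (starRingEnd ℂ) (bell x z (q.1, q.2.1)) else 0) *
        (if p.1 = (x, z) ∧ p.2 = q'.2.2 then (starRingEnd ℂ) (bell x z (q'.1, q'.2.1)) else 0))
      = if q.2.2 = q'.2.2 then bell x z (q.1, q.2.1) * (starRingEnd ℂ) (bell x z (q'.1, q'.2.1)) else 0 := by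
    intro x z
    rw [Fintype.sum_prod_type]
    simp [Finset.sum_ite_eq', ite_and, apply_ite (starRingEnd ℂ)]
    rcases eq_or_ne q.2.2 q'.2.2 with h | h
    · simp [h]
    · simp [h, h.symm]
  simp only [this]
  by_cases h : q.2.2 = q'.2.2
  · simp only [if_pos h, bell_complete, Matrix.one_apply]
    obtain ⟨a, b, f⟩ := q; obtain ⟨a', b', f'⟩ := q'
    simp_all [Prod.ext_iff]
  · simp only [if_neg h, Finset.sum_const_zero, Matrix.one_apply]
    rw [if_neg (fun hq => h (by rw [hq]))]

lemma UM_QF0 (x z : Bit) : (UM x z)ᴴ * QF0 * UM x z = Pb0 x z := by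
  ext q q'
  simp only [Matrix.mul_apply, Matrix.conjTranspose_apply, UM, QF0, Pb0, Matrix.of_apply]
  rw [Fintype.sum_prod_type]
  simp [Fintype.sum_prod_type, Finset.sum_ite_eq', ite_and, mul_ite, ite_mul,
    apply_ite (starRingEnd ℂ), Finset.mul_sum, Finset.sum_ite_eq]
  rcases eq_or_ne q.2.2 0 with h | h <;> rcases eq_or_ne q'.2.2 0 with h' | h' <;>
    simp [h, h', mul_comm]
  all_goals exact fun h0 => absurd h0.symm h

lemma UM_Qxz0 (x z x' z' : Bit) :
    (UM x' z')ᴴ * Qxz0 x z * UM x' z' =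
      if x' = x ∧ z' = z then Pb0 x z else 0 := by
  ext q q'
  simp only [Matrix.mul_apply, Matrix.conjTranspose_apply, UM, Qxz0, Pb0, Matrix.of_apply]
  rw [Fintype.sum_prod_type]
  simp [Fintype.sum_prod_type, Finset.sum_ite_eq', ite_and, mul_ite, ite_mul,
    apply_ite (starRingEnd ℂ), Finset.mul_sum, Finset.sum_ite_eq, Prod.ext_iff]
  rcases eq_or_ne q.2.2 0 with h | h <;> rcases eq_or_ne q'.2.2 0 with h' | h' <;>
    rcases eq_or_ne x' x with hx | hx <;> rcases eq_or_ne z' z with hz | hz <;>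
    simp_all [Matrix.zero_apply, mul_comm]
  all_goals exact fun h0 => absurd h0.symm h

lemma sum_Pb0 : ∑ x : Bit, ∑ z : Bit, Pb0 x z = PF0 := by
  ext q q'
  simp only [Matrix.sum_apply, Pb0, PF0, Matrix.of_apply]
  rcases eq_or_ne q.2.2 0 with h | h <;> rcases eq_or_ne q'.2.2 0 with h' | h' <;>
    simp [h, h', bell_complete, Prod.ext_iff]

lemma MB_PF0 (x z : Bit) : (MB x z)ᴴ * PF0 * MB x z = PF0 := by
  ext q q'
  simp only [Matrix.mul_apply, Matrix.conjTranspose_apply, MB, PF0, Matrix.of_apply]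
  rw [Fintype.sum_prod_type]
  simp [Fintype.sum_prod_type, Finset.sum_ite_eq', ite_and, mul_ite, ite_mul,
    apply_ite (starRingEnd ℂ), Finset.mul_sum, Finset.sum_ite_eq, Prod.ext_iff]
  simp only [pauli_unit]
  by_cases h1 : q.1 = q'.1 <;> by_cases h2 : q.2.1 = q'.2.1 <;>
    by_cases h3 : q.2.2 = 0 <;> by_cases h4 : q'.2.2 = 0 <;>
    simp_all [eq_comm]

lemma MB_Pb0 (x z : Bit) : (MB x z)ᴴ * Pb0 x z * MB x z = Pepr0 := by
  ext q q'
  simp only [Matrix.mul_apply, Matrix.conjTranspose_apply, MB, Pb0, Pepr0, Matrix.of_apply]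
  rw [Fintype.sum_prod_type]
  simp [Fintype.sum_prod_type, Finset.sum_ite_eq', ite_and, mul_ite, ite_mul,
    apply_ite (starRingEnd ℂ), Finset.mul_sum, Finset.sum_ite_eq, Prod.ext_iff]
  rcases eq_or_ne q.2.2 0 with h3 | h3
  swap
  · rcases eq_or_ne q'.2.2 0 with h4 | h4 <;> simp [h3, h4] <;>
      exact fun h0 => absurd h0.symm h3
  rcases eq_or_ne q'.2.2 0 with h4 | h4
  swap
  · simp [h3, h4]
  simp [h3, h4]
  have e1 : ∀ x1 : Bit, (∑ x2 : Bit, (starRingEnd ℂ) (pauli x z x2 q.1) *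
      (bell x z (x2, q.2.1) * (starRingEnd ℂ) (bell x z (x1, q'.2.1))))
      = epr (q.1, q.2.1) * (starRingEnd ℂ) (bell x z (x1, q'.2.1)) := by
    intro x1
    simp only [← mul_assoc]
    rw [← Finset.sum_mul, sum_conj_pauli_bell]
  have e2 : (starRingEnd ℂ) (epr (q'.1, q'.2.1))
      = ∑ x1 : Bit, (starRingEnd ℂ) (bell x z (x1, q'.2.1)) * pauli x z x1 q'.1 := by
    rw [← sum_conj_pauli_bell x z q'.1 q'.2.1, map_sum]
    exact Finset.sum_congr rfl fun a _ => by
      rw [_root_.map_mul, Complex.conj_conj, mul_comm]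
  simp only [e1, mul_assoc]
  rw [← Finset.mul_sum, ← e2]

lemma extB_mask (A : Matrix (Bit × Bit) (Fin dR) ℂ) (x z : Bit) :
    extB A * maskB dR x z = MB x z * extB A := by
  ext p q
  simp only [Matrix.mul_apply, extB, maskB, MB, Matrix.of_apply]
  rw [Fintype.sum_prod_type, Fintype.sum_prod_type]
  simp [Finset.sum_ite_eq', ite_and, mul_ite, ite_mul, Finset.sum_ite_eq, mul_comm]

lemma extB_kraus {k : ℕ} (K : Fin k → Matrix (Bit × Bit) (Fin dR) ℂ) (hK : IsKraus K) :
    ∑ i, (extB (K i))ᴴ * extB (K i) = 1 := by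
  have h1 : ∀ i, (extB (K i))ᴴ * extB (K i) =
      Matrix.of fun p q : Bit × Fin dR => if p.1 = q.1 then ((K i)ᴴ * K i) p.2 q.2 else 0 := by
    intro i
    ext p q
    simp only [Matrix.mul_apply, Matrix.conjTranspose_apply, extB, Matrix.of_apply]
    rw [Fintype.sum_prod_type]
    rcases eq_or_ne p.1 q.1 with h | h
    · simp [h, Finset.sum_ite_eq', ite_and, mul_ite, ite_mul, Finset.sum_ite_eq]
    · simp [h, Ne.symm h, Finset.sum_ite_eq', ite_and, mul_ite, ite_mul, Finset.sum_ite_eq]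
  simp only [h1]
  ext p q
  simp only [Matrix.sum_apply, Matrix.of_apply]
  by_cases h : p.1 = q.1
  · have h2 : ∑ i, ((K i)ᴴ * K i) p.2 q.2 = (1 : Matrix (Fin dR) (Fin dR) ℂ) p.2 q.2 := by
      rw [← hK, Matrix.sum_apply]
    simp only [if_pos h, h2, Matrix.one_apply]
    obtain ⟨p1, p2⟩ := p; obtain ⟨q1, q2⟩ := q
    simp_all [Prod.ext_iff]
  · simp only [if_neg h, Finset.sum_const_zero, Matrix.one_apply]
    rw [if_neg (fun hq => h (by rw [hq]))]

lemma trace_conj {α β : Type*} [Fintype α] [Fintype β]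
    (P : Matrix α α ℂ) (A : Matrix α β ℂ) (Y : Matrix β β ℂ) :
    (P * (A * Y * Aᴴ)).trace = ((Aᴴ * P * A) * Y).trace := by
  rw [show P * (A * Y * Aᴴ) = (P * (A * Y)) * Aᴴ by simp [Matrix.mul_assoc],
    Matrix.trace_mul_comm, show Aᴴ * (P * (A * Y)) = (Aᴴ * P * A) * Y by simp [Matrix.mul_assoc]]

def sdK {dR k : ℕ} (K : Fin k → Matrix (Bit × Bit) (Fin dR) ℂ) (t : Fin k × Bit × Bit) :
    Matrix ((Bit × Bit) × Bit) (Bit × Fin dR) ℂ := UM t.2.1 t.2.2 * extB (K t.1)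

lemma sum_sdK {dR k : ℕ} (K : Fin k → Matrix (Bit × Bit) (Fin dR) ℂ) (hK : IsKraus K) :
    ∑ t : Fin k × Bit × Bit, (sdK K t)ᴴ * sdK K t = 1 := by
  rw [Fintype.sum_prod_type]
  have per : ∀ i : Fin k, (∑ xz : Bit × Bit, (sdK K (i, xz))ᴴ * sdK K (i, xz))
      = (extB (K i))ᴴ * extB (K i) := by
    intro i
    rw [Fintype.sum_prod_type]
    have e1 : ∀ x z : Bit, (sdK K (i, x, z))ᴴ * sdK K (i, x, z)
        = (extB (K i))ᴴ * ((UM x z)ᴴ * UM x z) * extB (K i) := by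
      intro x z; simp only [sdK, Matrix.conjTranspose_mul, Matrix.mul_assoc]
    simp only [e1]
    calc ∑ x : Bit, ∑ z : Bit, (extB (K i))ᴴ * ((UM x z)ᴴ * UM x z) * extB (K i)
        = (extB (K i))ᴴ * (∑ x : Bit, ∑ z : Bit, (UM x z)ᴴ * UM x z) * extB (K i) := by
          simp only [Matrix.mul_sum, Matrix.sum_mul, Finset.mul_sum, Finset.sum_mul]
      _ = (extB (K i))ᴴ * extB (K i) := by rw [sum_UM, Matrix.mul_one]
  rw [Finset.sum_congr rfl fun i _ => per i]
  exact extB_kraus K hK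

lemma trace_sdK {dH dR k : ℕ} (ψ : Fin dH × Bit × Fin dR → ℂ)
    (K : Fin k → Matrix (Bit × Bit) (Fin dR) ℂ)
    (P : Matrix ((Bit × Bit) × Bit) ((Bit × Bit) × Bit) ℂ) (x z : Bit) :
    (P * ∑ t : Fin k × Bit × Bit, sdK K t * rhoXZ ψ x z * (sdK K t)ᴴ).trace
      = ∑ x' : Bit, ∑ z' : Bit,
          (((MB x z)ᴴ * ((UM x' z')ᴴ * P * UM x' z') * MB x z) *
            applyCh (fun i => extB (K i)) (rhoBR ψ)).trace := by
  have per : ∀ (i : Fin k) (x' z' : Bit),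
      (P * (sdK K (i, x', z') * rhoXZ ψ x z * (sdK K (i, x', z'))ᴴ)).trace
        = (((MB x z)ᴴ * ((UM x' z')ᴴ * P * UM x' z') * MB x z) *
            (extB (K i) * rhoBR ψ * (extB (K i))ᴴ)).trace := by
    intro i x' z'
    have hA : sdK K (i, x', z') * rhoXZ ψ x z * (sdK K (i, x', z'))ᴴ
        = (UM x' z' * MB x z) * (extB (K i) * rhoBR ψ * (extB (K i))ᴴ) *
            (UM x' z' * MB x z)ᴴ := by
      calc sdK K (i, x', z') * rhoXZ ψ x z * (sdK K (i, x', z'))ᴴ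
          = UM x' z' * ((extB (K i) * maskB dR x z) * rhoBR ψ *
              (extB (K i) * maskB dR x z)ᴴ) * (UM x' z')ᴴ := by
            simp only [sdK, rhoXZ, Matrix.conjTranspose_mul, Matrix.mul_assoc]
        _ = UM x' z' * ((MB x z * extB (K i)) * rhoBR ψ *
              (MB x z * extB (K i))ᴴ) * (UM x' z')ᴴ := by rw [extB_mask]
        _ = (UM x' z' * MB x z) * (extB (K i) * rhoBR ψ * (extB (K i))ᴴ) *
              (UM x' z' * MB x z)ᴴ := by
            simp only [Matrix.conjTranspose_mul, Matrix.mul_assoc]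
    rw [hA, trace_conj]
    congr 1
    simp only [Matrix.conjTranspose_mul, Matrix.mul_assoc]
  rw [Finset.mul_sum, Matrix.trace_sum, Fintype.sum_prod_type, Finset.sum_comm,
    Fintype.sum_prod_type]
  refine Finset.sum_congr rfl fun x' _ => Finset.sum_congr rfl fun z' _ => ?_
  calc ∑ i : Fin k, (P * (sdK K (i, x', z') * rhoXZ ψ x z * (sdK K (i, x', z'))ᴴ)).trace
      = ∑ i : Fin k, (((MB x z)ᴴ * ((UM x' z')ᴴ * P * UM x' z') * MB x z) *
          (extB (K i) * rhoBR ψ * (extB (K i))ᴴ)).trace :=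
        Finset.sum_congr rfl fun i _ => per i x' z'
    _ = _ := by rw [applyCh, Finset.mul_sum, Matrix.trace_sum]

end AuxSD

/-- if there exists a `(γ,ε)`-radiation decoder against `|ψ⟩`,
then there exists a `(γ,ε)`-superdense decoder against `|ψ⟩`. -/
theorem rad_decoder_implies_superdense_decoder
    (dH dR : ℕ) (hdH : 1 ≤ dH) (hdR : 1 ≤ dR)
    (ψ : Fin dH × Bit × Fin dR → ℂ)
    (hψ : ∑ p, Complex.normSq (ψ p) = 1)
    (γ ε : ℝ) (hγ : γ ∈ Set.Icc (0:ℝ) 1) (hε : ε ∈ Set.Icc (0:ℝ) 1)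
    (hdec : ∃ (k : ℕ) (K : Fin k → Matrix (Bit × Bit) (Fin dR) ℂ),
      IsRadDecoder ψ γ ε K) :
    ∃ (k : ℕ) (S : Fin k → Matrix ((Bit × Bit) × Bit) (Bit × Fin dR) ℂ),
      IsSupDecoder ψ γ ε S := by
  obtain ⟨k, K, hKr, hg, he⟩ := hdec
  classical
  let e := Fintype.equivFin (Fin k × Bit × Bit)
  refine ⟨Fintype.card (Fin k × Bit × Bit), fun i => sdK K (e.symm i), ?_, ?_, ?_⟩
  · show (∑ i, (sdK K (e.symm i))ᴴ * sdK K (e.symm i)) = 1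
    rw [Equiv.sum_comp e.symm (fun t => (sdK K t)ᴴ * sdK K t)]
    exact sum_sdK K hKr
  all_goals {
  have happ : ∀ x z : Bit, applyCh (fun i => sdK K (e.symm i)) (rhoXZ ψ x z)
      = ∑ t : Fin k × Bit × Bit, sdK K t * rhoXZ ψ x z * (sdK K t)ᴴ := fun x z =>
    Equiv.sum_comp e.symm (fun t => sdK K t * rhoXZ ψ x z * (sdK K t)ᴴ)
  have hG : ∀ x z : Bit,
      (QF0 * applyCh (fun i => sdK K (e.symm i)) (rhoXZ ψ x z)).trace
        = (PF0 * applyCh (fun i => extB (K i)) (rhoBR ψ)).trace := by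
    intro x z
    rw [happ, trace_sdK]
    simp only [UM_QF0]
    calc ∑ x' : Bit, ∑ z' : Bit, (((MB x z)ᴴ * Pb0 x' z' * MB x z) *
          applyCh (fun i => extB (K i)) (rhoBR ψ)).trace
        = (((MB x z)ᴴ * (∑ x' : Bit, ∑ z' : Bit, Pb0 x' z') * MB x z) *
            applyCh (fun i => extB (K i)) (rhoBR ψ)).trace := by
          simp only [Matrix.mul_sum, Matrix.sum_mul, Finset.mul_sum, Finset.sum_mul,
            Matrix.trace_sum]
      _ = _ := by rw [sum_Pb0, MB_PF0]
  have hE : ∀ x z : Bit,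
      (Qxz0 x z * applyCh (fun i => sdK K (e.symm i)) (rhoXZ ψ x z)).trace
        = (Pepr0 * applyCh (fun i => extB (K i)) (rhoBR ψ)).trace := by
    intro x z
    rw [happ, trace_sdK]
    simp only [UM_Qxz0]
    have step : ∀ x' z' : Bit,
        (((MB x z)ᴴ * (if x' = x ∧ z' = z then Pb0 x z else 0) * MB x z) *
          applyCh (fun i => extB (K i)) (rhoBR ψ)).trace
        = if x' = x ∧ z' = z then (((MB x z)ᴴ * Pb0 x z * MB x z) *
            applyCh (fun i => extB (K i)) (rhoBR ψ)).trace else 0 := by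
      intro x' z'; split <;> simp
    simp only [step]
    rw [MB_Pb0]
    simp [ite_and, Finset.sum_ite_eq, Finset.sum_ite_eq']
  first
  | -- goal 2
    (show γ ≤ (1/4) * ∑ x : Bit, ∑ z : Bit,
        ((QF0 * applyCh (fun i => sdK K (e.symm i)) (rhoXZ ψ x z)).trace).re
     simp only [hG, bit_sum]
     linarith [hg])
  | -- goal 3
    (simp only [hG, hE, bit_sum]
     ring_nf
     ring_nf at he
     linarith [he]) }

end BHRD
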